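/- In the reduction from max-cut, No instances give small H2S value: if every cut of G has size at most c−1, then every partition of the constructed vectors into two clusters has total ℓ1 value at most 2M²(c−1) + √2·(n−2)·m·M^{3/2}. -/

import Mathlib

/-- The vector associated with the `j`-th copy of vertex `i` in the reduction:
coordinates are indexed by (edge, position in block). -/
noncomputable def redVec {n m M : ℕ} (head tail : Fin m → Fin n)
    (Had : Fin M → Fin M → ℝ) (i : Fin n) (j : Fin M) : Fin m × Fin M → ℝ :=
  fun p => if head p.1 = i then 1 else if tail p.1 = i then -1 else Had j p.2

/-- The H2S value of the partition (X, Xᶜ) of the constructed vectors. -/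
noncomputable def h2sValue {n m M : ℕ} (head tail : Fin m → Fin n)
    (Had : Fin M → Fin M → ℝ) (X : Finset (Fin n × Fin M)) : ℝ :=
  (∑ p : Fin m × Fin M, |∑ v ∈ X, redVec head tail Had v.1 v.2 p|) +
    ∑ p : Fin m × Fin M, |∑ v ∈ Xᶜ, redVec head tail Had v.1 v.2 p|


open Finset

namespace H2SAux

variable {n m M : ℕ}

/-- count of copies of vertex `i` in `Y` -/
def aCnt (Y : Finset (Fin n × Fin M)) (i : Fin n) : ℕ :=
  (Y.filter (fun v => v.1 = i)).card

/-- count of copies with Hadamard row `j` among vertices not incident to edge `e` -/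
def cCnt (head tail : Fin m → Fin n) (Y : Finset (Fin n × Fin M)) (e : Fin m) (j : Fin M) : ℕ :=
  (Y.filter (fun v => v.2 = j ∧ v.1 ≠ head e ∧ v.1 ≠ tail e)).card

lemma decomp (head tail : Fin m → Fin n) (Had : Fin M → Fin M → ℝ)
    (Y : Finset (Fin n × Fin M)) (e : Fin m) (he : head e ≠ tail e) (p : Fin M) :
    ∑ v ∈ Y, redVec head tail Had v.1 v.2 (e, p)
      = ((aCnt Y (head e) : ℝ) - aCnt Y (tail e))
        + ∑ j, (cCnt head tail Y e j : ℝ) * Had j p := by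
  have hsplit : ∀ v : Fin n × Fin M,
      redVec head tail Had v.1 v.2 (e, p)
        = ((if v.1 = head e then (1:ℝ) else 0) - (if v.1 = tail e then (1:ℝ) else 0))
          + (if v.1 ≠ head e ∧ v.1 ≠ tail e then Had v.2 p else 0) := by
    intro v
    by_cases h1 : head e = v.1
    · have h2 : v.1 ≠ tail e := fun h => he (h1.trans h)
      simp [redVec, h1.symm, he]
    · by_cases h2 : tail e = v.1
      · simp [redVec, h2.symm, he, Ne.symm he, h1]
      · simp [redVec, h1, Ne.symm h1, h2, Ne.symm h2]
  rw [Finset.sum_congr rfl (fun v _ => hsplit v), Finset.sum_add_distrib,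
    Finset.sum_sub_distrib]
  congr 1
  · congr 1
    · rw [Finset.sum_boole]; rfl
    · rw [Finset.sum_boole]; rfl
  · rw [← Finset.sum_fiberwise Y (fun v => v.2)
      (fun v => if v.1 ≠ head e ∧ v.1 ≠ tail e then Had v.2 p else 0)]
    refine Finset.sum_congr rfl (fun j _ => ?_)
    rw [← Finset.sum_filter, Finset.filter_filter]
    have : ∀ v ∈ Y.filter (fun v : Fin n × Fin M => v.2 = j ∧ v.1 ≠ head e ∧ v.1 ≠ tail e),
        Had v.2 p = Had j p := by
      intro v hv
      rw [(Finset.mem_filter.mp hv).2.1]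
    rw [Finset.sum_congr rfl this, Finset.sum_const, nsmul_eq_mul]
    rfl

lemma orth_sum (Had : Fin M → Fin M → ℝ)
    (hHpm : ∀ j p, Had j p = 1 ∨ Had j p = -1)
    (hHorth : ∀ j k, j ≠ k → ∑ p, Had j p * Had k p = 0)
    (c : Fin M → ℝ) :
    ∑ p, (∑ j, c j * Had j p)^2 = M * ∑ j, (c j)^2 := by
  have step : ∀ p : Fin M, (∑ j, c j * Had j p)^2
      = ∑ j, ∑ k, (c j * c k) * (Had j p * Had k p) := by
    intro p
    rw [sq, Finset.sum_mul_sum]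
    exact Finset.sum_congr rfl fun j _ => Finset.sum_congr rfl fun k _ => by ring
  rw [Finset.sum_congr rfl fun p _ => step p]
  rw [Finset.sum_comm]
  have inner : ∀ j : Fin M, ∑ p, ∑ k, (c j * c k) * (Had j p * Had k p) = (c j)^2 * M := by
    intro j
    rw [Finset.sum_comm]
    rw [Finset.sum_congr rfl (fun k _ => by rw [← Finset.mul_sum] :
      ∀ k ∈ univ, ∑ p, (c j * c k) * (Had j p * Had k p) = (c j * c k) * ∑ p, Had j p * Had k p)]
    rw [Finset.sum_eq_single j]
    · have : ∀ p : Fin M, Had j p * Had j p = 1 := fun p => by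
        rcases hHpm j p with h | h <;> rw [h] <;> norm_num
      rw [Finset.sum_congr rfl fun p _ => this p, Finset.sum_const, nsmul_eq_mul,
        Finset.card_univ, Fintype.card_fin]
      ring
    · intro k _ hk
      rw [hHorth j k (Ne.symm hk), mul_zero]
    · intro h
      exact absurd (Finset.mem_univ j) h
  rw [Finset.sum_congr rfl fun j _ => inner j, ← Finset.sum_mul]
  ring

lemma l1_le (S : Fin M → ℝ) : ∑ p, |S p| ≤ Real.sqrt (M * ∑ p, (S p)^2) := by
  have h0 : (0:ℝ) ≤ ∑ p, |S p| := Finset.sum_nonneg fun _ _ => abs_nonneg _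
  have hy : (0:ℝ) ≤ (M:ℝ) * ∑ p, (S p)^2 := by positivity
  refine (Real.le_sqrt h0 hy).mpr ?_
  have h := Finset.sum_mul_sq_le_sq_mul_sq univ (fun _ => (1:ℝ)) (fun p => |S p|)
  simp only [one_mul, one_pow] at h
  calc (∑ p, |S p|)^2 ≤ (∑ _p : Fin M, (1:ℝ)) * ∑ p, |S p|^2 := h
    _ = (M:ℝ) * ∑ p, (S p)^2 := by
        rw [Finset.sum_const, card_univ, Fintype.card_fin, nsmul_eq_mul, mul_one]
        congr 1
        exact Finset.sum_congr rfl fun p _ => sq_abs _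

lemma cut_abs' (M x y : ℕ) (hxy : x ≤ y) (hy : y ≤ M) :
    (((Finset.range M).filter (fun k => ¬ (k < x ↔ k < y))).card : ℝ) = (y:ℝ) - x := by
  have h : (Finset.range M).filter (fun k => ¬(k < x ↔ k < y)) = Finset.Ico x y := by
    ext k
    simp only [Finset.mem_filter, Finset.mem_range, Finset.mem_Ico]
    omega
  rw [h, Nat.card_Ico, Nat.cast_sub hxy]

lemma cut_abs (M x y : ℕ) (hx : x ≤ M) (hy : y ≤ M) :
    |(x:ℝ) - y| = ∑ k ∈ Finset.range M, (if ¬ (k < x ↔ k < y) then (1:ℝ) else 0) := by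
  rw [Finset.sum_boole]
  rcases le_total x y with h | h
  · rw [cut_abs' M x y h hy, abs_sub_comm, abs_of_nonneg (by
      have : (x:ℝ) ≤ y := by exact_mod_cast h
      linarith)]
  · have hcomm : (Finset.range M).filter (fun k => ¬(k < x ↔ k < y))
        = (Finset.range M).filter (fun k => ¬(k < y ↔ k < x)) := by
      apply Finset.filter_congr; intro k _; constructor <;> (intro hh; tauto)
    rw [hcomm, cut_abs' M y x h hx, abs_of_nonneg (by
      have : (y:ℝ) ≤ x := by exact_mod_cast h
      linarith)]

lemma cut_sum (head tail : Fin m → Fin n) (C : ℝ)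
    (hnocut : ∀ S : Finset (Fin n),
      ((Finset.univ.filter
          (fun e : Fin m => ¬ (head e ∈ S ↔ tail e ∈ S))).card : ℝ) ≤ C)
    (a : Fin n → ℕ) (ha : ∀ i, a i ≤ M) :
    ∑ e : Fin m, |(a (head e):ℝ) - a (tail e)| ≤ (M:ℝ) * C := by
  have key : ∀ e : Fin m, |(a (head e):ℝ) - a (tail e)|
      = ∑ k ∈ Finset.range M, (if ¬ (k < a (head e) ↔ k < a (tail e)) then (1:ℝ) else 0) :=
    fun e => cut_abs M _ _ (ha _) (ha _)
  rw [Finset.sum_congr rfl fun e _ => key e, Finset.sum_comm]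
  have hk : ∀ k : ℕ, ∑ e : Fin m, (if ¬ (k < a (head e) ↔ k < a (tail e)) then (1:ℝ) else 0) ≤ C := by
    intro k
    rw [Finset.sum_boole]
    have hset : (Finset.univ.filter (fun x : Fin m => ¬ (k < a (head x) ↔ k < a (tail x))))
        = (Finset.univ.filter (fun e : Fin m =>
            ¬ (head e ∈ Finset.univ.filter (fun i => k < a i)
              ↔ tail e ∈ Finset.univ.filter (fun i => k < a i)))) := by
      apply Finset.filter_congr
      intro e _
      simp
    rw [hset]
    exact hnocut _
  calc ∑ k ∈ Finset.range M, ∑ e : Fin m, (if ¬ (k < a (head e) ↔ k < a (tail e)) then (1:ℝ) else 0)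
      ≤ ∑ _k ∈ Finset.range M, C := Finset.sum_le_sum fun k _ => hk k
    _ = (M:ℝ) * C := by rw [Finset.sum_const, Finset.card_range, nsmul_eq_mul]

lemma filter_univ_fst (i : Fin n) :
    (univ.filter (fun v : Fin n × Fin M => v.1 = i)).card = M := by
  have h : (univ.filter (fun v : Fin n × Fin M => v.1 = i)) = {i} ×ˢ univ := by
    ext v
    simp only [Finset.mem_filter, Finset.mem_univ, true_and, Finset.mem_product,
      Finset.mem_singleton, and_true]
  rw [h, Finset.card_product, Finset.card_singleton, Finset.card_univ, Fintype.card_fin, one_mul]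

lemma aCnt_add (X : Finset (Fin n × Fin M)) (i : Fin n) :
    aCnt X i + aCnt Xᶜ i = M := by
  unfold aCnt
  rw [← Finset.card_union_of_disjoint (Finset.disjoint_filter_filter disjoint_compl_right),
    ← Finset.filter_union, Finset.union_compl]
  exact filter_univ_fst i

lemma aCnt_le (Y : Finset (Fin n × Fin M)) (i : Fin n) : aCnt Y i ≤ M := by
  unfold aCnt
  refine le_trans (Finset.card_le_card
    (Finset.filter_subset_filter _ (Finset.subset_univ Y))) ?_
  rw [filter_univ_fst]

lemma two_le {a b : Fin n} (hab : a ≠ b) : 2 ≤ n := by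
  have h2 : ({a, b} : Finset (Fin n)).card = 2 := by
    rw [Finset.card_insert_of_notMem (by simp [hab]), Finset.card_singleton]
  calc 2 = ({a, b} : Finset (Fin n)).card := h2.symm
    _ ≤ (univ : Finset (Fin n)).card := Finset.card_le_card (Finset.subset_univ _)
    _ = n := by rw [Finset.card_univ, Fintype.card_fin]

lemma cCnt_add (head tail : Fin m → Fin n) (X : Finset (Fin n × Fin M)) (e : Fin m)
    (he : head e ≠ tail e) (j : Fin M) :
    cCnt head tail X e j + cCnt head tail Xᶜ e j = n - 2 := by
  unfold cCnt
  rw [← Finset.card_union_of_disjoint (Finset.disjoint_filter_filter disjoint_compl_right),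
    ← Finset.filter_union, Finset.union_compl]
  have h1 : (univ.filter (fun v : Fin n × Fin M => v.2 = j ∧ v.1 ≠ head e ∧ v.1 ≠ tail e))
      = (univ.filter (fun i : Fin n => i ≠ head e ∧ i ≠ tail e)) ×ˢ ({j} : Finset (Fin M)) := by
    ext v
    simp only [Finset.mem_filter, Finset.mem_univ, true_and, Finset.mem_product,
      Finset.mem_singleton]
    tauto
  rw [h1, Finset.card_product, Finset.card_singleton, mul_one]
  have h2 : (univ.filter (fun i : Fin n => i ≠ head e ∧ i ≠ tail e))
      = ({head e, tail e} : Finset (Fin n))ᶜ := by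
    ext i
    simp only [Finset.mem_filter, Finset.mem_univ, true_and, Finset.mem_compl,
      Finset.mem_insert, Finset.mem_singleton]
    tauto
  rw [h2, Finset.card_compl, Fintype.card_fin]
  congr 1
  rw [Finset.card_insert_of_notMem (by simp [he]), Finset.card_singleton]

end H2SAux

theorem no_instance_bound (n m M c : ℕ) (head tail : Fin m → Fin n)
    (hsimple : ∀ e, head e ≠ tail e)
    (Had : Fin M → Fin M → ℝ)
    (hHpm : ∀ j p, Had j p = 1 ∨ Had j p = -1)
    (hHorth : ∀ j k, j ≠ k → ∑ p, Had j p * Had k p = 0)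
    (hnocut : ∀ S : Finset (Fin n),
      ((Finset.univ.filter
          (fun e : Fin m => ¬ (head e ∈ S ↔ tail e ∈ S))).card : ℝ) ≤ (c : ℝ) - 1) :
    ∀ X : Finset (Fin n × Fin M),
      h2sValue head tail Had X
        ≤ 2 * (M : ℝ) ^ 2 * ((c : ℝ) - 1)
          + Real.sqrt 2 * ((n : ℝ) - 2) * (m : ℝ) * (M : ℝ) ^ ((3 : ℝ) / 2) := by
  classical
  intro X
  open H2SAux Finset in
  have hC0 : (0:ℝ) ≤ (c:ℝ) - 1 := le_trans (by positivity) (hnocut ∅)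
  have hM32 : (M:ℝ) ^ ((3:ℝ)/2) = (M:ℝ) * Real.sqrt M := by
    rcases Nat.eq_zero_or_pos M with h | h
    · subst h
      norm_num [Real.zero_rpow (by norm_num : ((3:ℝ)/2) ≠ 0)]
    · have hM : (0:ℝ) < M := by exact_mod_cast h
      rw [show ((3:ℝ)/2) = 1 + 1/2 by norm_num, Real.rpow_add hM, Real.rpow_one,
        ← Real.sqrt_eq_rpow]
  rcases Nat.eq_zero_or_pos m with hm | hm
  · subst hm
    have hz : h2sValue head tail Had X = 0 := by
      simp [h2sValue]
    rw [hz]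
    have hzero : Real.sqrt 2 * ((n:ℝ) - 2) * ((0:ℕ):ℝ) * ((M:ℝ) ^ ((3:ℝ)/2)) = 0 := by
      push_cast
      ring
    rw [hzero, add_zero]
    have := mul_nonneg (by positivity : (0:ℝ) ≤ 2 * (M:ℝ)^2) hC0
    linarith
  have hn2 : 2 ≤ n := two_le (hsimple ⟨0, hm⟩)
  have hn2' : (0:ℝ) ≤ (n:ℝ) - 2 := by
    have h2n : (2:ℝ) ≤ (n:ℝ) := by exact_mod_cast hn2
    linarith
  -- per-edge bound
  have perEdge : ∀ (Y : Finset (Fin n × Fin M)) (e : Fin m),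
      ∑ q : Fin M, |∑ v ∈ Y, redVec head tail Had v.1 v.2 (e, q)|
        ≤ (M:ℝ) * |(aCnt Y (head e):ℝ) - aCnt Y (tail e)|
          + (M:ℝ) * Real.sqrt (∑ j, ((cCnt head tail Y e j : ℝ))^2) := by
    intro Y e
    have he := hsimple e
    have habs : ∀ q : Fin M, |∑ v ∈ Y, redVec head tail Had v.1 v.2 (e, q)|
        ≤ |(aCnt Y (head e):ℝ) - aCnt Y (tail e)|
          + |∑ j, (cCnt head tail Y e j : ℝ) * Had j q| := by
      intro q
      rw [decomp head tail Had Y e he q]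
      exact abs_add_le _ _
    calc ∑ q : Fin M, |∑ v ∈ Y, redVec head tail Had v.1 v.2 (e, q)|
        ≤ ∑ q : Fin M, (|(aCnt Y (head e):ℝ) - aCnt Y (tail e)|
            + |∑ j, (cCnt head tail Y e j : ℝ) * Had j q|) :=
          Finset.sum_le_sum fun q _ => habs q
      _ = (M:ℝ) * |(aCnt Y (head e):ℝ) - aCnt Y (tail e)|
            + ∑ q : Fin M, |∑ j, (cCnt head tail Y e j : ℝ) * Had j q| := by
          rw [Finset.sum_add_distrib, Finset.sum_const, Finset.card_univ, Fintype.card_fin,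
            nsmul_eq_mul]
      _ ≤ (M:ℝ) * |(aCnt Y (head e):ℝ) - aCnt Y (tail e)|
            + Real.sqrt ((M:ℝ) * ∑ q, (∑ j, (cCnt head tail Y e j : ℝ) * Had j q)^2) :=
          add_le_add_right (l1_le _) _
      _ = (M:ℝ) * |(aCnt Y (head e):ℝ) - aCnt Y (tail e)|
            + Real.sqrt ((M:ℝ) * ((M:ℝ) * ∑ j, ((cCnt head tail Y e j : ℝ))^2)) := by
          rw [orth_sum Had hHpm hHorth]
      _ = (M:ℝ) * |(aCnt Y (head e):ℝ) - aCnt Y (tail e)|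
            + (M:ℝ) * Real.sqrt (∑ j, ((cCnt head tail Y e j : ℝ))^2) := by
          rw [show (M:ℝ) * ((M:ℝ) * ∑ j, ((cCnt head tail Y e j : ℝ))^2)
              = (M:ℝ)^2 * ∑ j, ((cCnt head tail Y e j : ℝ))^2 by ring,
            Real.sqrt_mul (sq_nonneg _), Real.sqrt_sq (by positivity : (0:ℝ) ≤ (M:ℝ))]
  -- the two partition classes have opposite discrepancies
  have hΔ : ∀ e : Fin m, |(aCnt Xᶜ (head e):ℝ) - aCnt Xᶜ (tail e)|
      = |(aCnt X (head e):ℝ) - aCnt X (tail e)| := by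
    intro e
    have h1 : (aCnt X (head e):ℝ) + aCnt Xᶜ (head e) = M := by
      exact_mod_cast congrArg (fun t : ℕ => (t:ℝ)) (aCnt_add X (head e))
    have h2 : (aCnt X (tail e):ℝ) + aCnt Xᶜ (tail e) = M := by
      exact_mod_cast congrArg (fun t : ℕ => (t:ℝ)) (aCnt_add X (tail e))
    rw [show (aCnt Xᶜ (head e):ℝ) - aCnt Xᶜ (tail e)
        = -((aCnt X (head e):ℝ) - aCnt X (tail e)) by linarith, abs_neg]
  -- fractional cut bound
  have hcut : ∑ e : Fin m, |(aCnt X (head e):ℝ) - aCnt X (tail e)| ≤ (M:ℝ) * ((c:ℝ) - 1) :=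
    cut_sum head tail _ hnocut _ (fun i => aCnt_le X i)
  -- combining the two square roots
  have hcomb : ∀ e : Fin m,
      Real.sqrt (∑ j, ((cCnt head tail X e j : ℝ))^2)
        + Real.sqrt (∑ j, ((cCnt head tail Xᶜ e j : ℝ))^2)
        ≤ ((n:ℝ) - 2) * Real.sqrt (2 * M) := by
    intro e
    set A := ∑ j, ((cCnt head tail X e j : ℝ))^2 with hAdef
    set B := ∑ j, ((cCnt head tail Xᶜ e j : ℝ))^2 with hBdef
    have hA : 0 ≤ A := Finset.sum_nonneg fun _ _ => sq_nonneg _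
    have hB : 0 ≤ B := Finset.sum_nonneg fun _ _ => sq_nonneg _
    have hAB : A + B ≤ (M:ℝ) * ((n:ℝ) - 2)^2 := by
      have hj : ∀ j : Fin M, ((cCnt head tail X e j : ℝ))^2 + ((cCnt head tail Xᶜ e j : ℝ))^2
          ≤ ((n:ℝ) - 2)^2 := by
        intro j
        have h := cCnt_add head tail X e (hsimple e) j
        have h' : (cCnt head tail X e j : ℝ) + (cCnt head tail Xᶜ e j : ℝ) = (n:ℝ) - 2 := by
          have hc := congrArg (fun t : ℕ => (t:ℝ)) h
          push_cast [Nat.cast_sub hn2] at hc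
          linarith [hc]
        have hx : (0:ℝ) ≤ (cCnt head tail X e j : ℝ) := Nat.cast_nonneg _
        have hy : (0:ℝ) ≤ (cCnt head tail Xᶜ e j : ℝ) := Nat.cast_nonneg _
        nlinarith [mul_nonneg hx hy]
      calc A + B = ∑ j, (((cCnt head tail X e j : ℝ))^2 + ((cCnt head tail Xᶜ e j : ℝ))^2) := by
            rw [hAdef, hBdef, Finset.sum_add_distrib]
        _ ≤ ∑ _j : Fin M, ((n:ℝ) - 2)^2 := Finset.sum_le_sum fun j _ => hj j
        _ = (M:ℝ) * ((n:ℝ) - 2)^2 := by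
            rw [Finset.sum_const, Finset.card_univ, Fintype.card_fin, nsmul_eq_mul]
    have hsum0 : 0 ≤ Real.sqrt A + Real.sqrt B :=
      add_nonneg (Real.sqrt_nonneg _) (Real.sqrt_nonneg _)
    have hsq : (Real.sqrt A + Real.sqrt B)^2 ≤ 2 * ((M:ℝ) * ((n:ℝ) - 2)^2) := by
      have e1 := Real.sq_sqrt hA
      have e2 := Real.sq_sqrt hB
      nlinarith [sq_nonneg (Real.sqrt A - Real.sqrt B)]
    calc Real.sqrt A + Real.sqrt B
        ≤ Real.sqrt (2 * ((M:ℝ) * ((n:ℝ) - 2)^2)) := (Real.le_sqrt hsum0 (by positivity)).mpr hsq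
      _ = ((n:ℝ) - 2) * Real.sqrt (2 * M) := by
          rw [show (2:ℝ) * ((M:ℝ) * ((n:ℝ) - 2)^2) = ((n:ℝ) - 2)^2 * (2 * (M:ℝ)) by ring,
            Real.sqrt_mul (sq_nonneg _), Real.sqrt_sq hn2']
  -- assemble everything
  have expand : h2sValue head tail Had X
      = (∑ e : Fin m, ∑ q : Fin M, |∑ v ∈ X, redVec head tail Had v.1 v.2 (e, q)|)
        + ∑ e : Fin m, ∑ q : Fin M, |∑ v ∈ Xᶜ, redVec head tail Had v.1 v.2 (e, q)| := by
    unfold h2sValue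
    rw [Fintype.sum_prod_type, Fintype.sum_prod_type]
  rw [expand]
  calc (∑ e : Fin m, ∑ q : Fin M, |∑ v ∈ X, redVec head tail Had v.1 v.2 (e, q)|)
        + ∑ e : Fin m, ∑ q : Fin M, |∑ v ∈ Xᶜ, redVec head tail Had v.1 v.2 (e, q)|
      ≤ (∑ e : Fin m, ((M:ℝ) * |(aCnt X (head e):ℝ) - aCnt X (tail e)|
            + (M:ℝ) * Real.sqrt (∑ j, ((cCnt head tail X e j : ℝ))^2)))
        + ∑ e : Fin m, ((M:ℝ) * |(aCnt Xᶜ (head e):ℝ) - aCnt Xᶜ (tail e)|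
            + (M:ℝ) * Real.sqrt (∑ j, ((cCnt head tail Xᶜ e j : ℝ))^2)) :=
        add_le_add (Finset.sum_le_sum fun e _ => perEdge X e)
          (Finset.sum_le_sum fun e _ => perEdge Xᶜ e)
    _ = 2 * (M:ℝ) * (∑ e : Fin m, |(aCnt X (head e):ℝ) - aCnt X (tail e)|)
          + (M:ℝ) * ∑ e : Fin m, (Real.sqrt (∑ j, ((cCnt head tail X e j : ℝ))^2)
              + Real.sqrt (∑ j, ((cCnt head tail Xᶜ e j : ℝ))^2)) := by
        simp only [hΔ, Finset.sum_add_distrib, ← Finset.mul_sum]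
        ring
    _ ≤ 2 * (M:ℝ) * ((M:ℝ) * ((c:ℝ) - 1))
          + (M:ℝ) * ∑ _e : Fin m, (((n:ℝ) - 2) * Real.sqrt (2 * M)) := by
        refine add_le_add ?_ ?_
        · exact mul_le_mul_of_nonneg_left hcut (by positivity)
        · exact mul_le_mul_of_nonneg_left (Finset.sum_le_sum fun e _ => hcomb e) (by positivity)
    _ = 2 * (M:ℝ)^2 * ((c:ℝ) - 1)
          + Real.sqrt 2 * ((n:ℝ) - 2) * (m:ℝ) * (M:ℝ) ^ ((3:ℝ)/2) := by
        rw [Finset.sum_const, Finset.card_univ, Fintype.card_fin, nsmul_eq_mul, hM32,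
          Real.sqrt_mul (by norm_num : (0:ℝ) ≤ 2)]
        ring
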